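/- The maximum cardinality of a 2-distance set X in H_7 such that R_7 ⊆ X and the two distances of X are 1 and √2 is exactly 12. -/

import Mathlib

noncomputable section

open scoped BigOperators Classical

/-- The set of Euclidean distances between distinct points of `X`. -/
def distSet {m : ℕ} (X : Set (EuclideanSpace ℝ (Fin m))) : Set ℝ :=
  {r | ∃ x ∈ X, ∃ y ∈ X, x ≠ y ∧ dist x y = r}

/-- `X` is a 2-distance set: exactly two distances occur between distinct points. -/
def IsTwoDistSet {m : ℕ} (X : Set (EuclideanSpace ℝ (Fin m))) : Prop :=
  (distSet X).ncard = 2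

/-- The affine hyperplane `H_d = {x ∈ ℝ^{d+1} : ∑ x_i = 1}`. -/
def Hplane (d : ℕ) : Set (EuclideanSpace ℝ (Fin (d+1))) :=
  {x | ∑ i, x i = 1}

/-- The regular simplex `R_d`: the standard basis vectors of `ℝ^{d+1}`. -/
def simplex (d : ℕ) : Set (EuclideanSpace ℝ (Fin (d+1))) :=
  Set.range (fun i => EuclideanSpace.single i (1:ℝ))

/-- The constant `c = (1 - (d+1-k)β)/(d+1)`. -/
def cval (d k : ℕ) (β : ℝ) : ℝ := (1 - ((d:ℝ) + 1 - (k:ℝ)) * β) / ((d:ℝ) + 1)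

/-- The set `T_d(k,β)` of points of `H_d` all of whose coordinates lie in `{c, c+β}`,
with exactly `k` coordinates equal to `c`. -/
def Tset (d k : ℕ) (β : ℝ) : Set (EuclideanSpace ℝ (Fin (d+1))) :=
  {x | x ∈ Hplane d ∧ (∀ i, x i = cval d k β ∨ x i = cval d k β + β) ∧
    {i | x i = cval d k β}.ncard = k}

/-- `𝔩(x,y) = |{i : x_i ≠ y_i}|/2`. -/
def lfun {m : ℕ} (x y : EuclideanSpace ℝ (Fin m)) : ℝ :=
  ({i | x i ≠ y i}.ncard : ℝ) / 2

/-! ### Auxiliary definitions and lemmas -/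

abbrev E8 := EuclideanSpace ℝ (Fin 8)

lemma dist_eq_sqrt' (x y : E8) : dist x y = Real.sqrt (∑ i, (x i - y i)^2) := by
  rw [EuclideanSpace.dist_eq]
  congr 1
  exact Finset.sum_congr rfl fun i _ => by rw [Real.dist_eq, sq_abs]

lemma dist_sq' (x y : E8) : dist x y ^ 2 = ∑ i, (x i - y i)^2 := by
  rw [dist_eq_sqrt', Real.sq_sqrt]
  positivity

lemma dist_of_sq_one {x y : E8} (h : ∑ i, (x i - y i)^2 = 1) : dist x y = 1 := by
  rw [dist_eq_sqrt', h, Real.sqrt_one]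

lemma dist_of_sq_two {x y : E8} (h : ∑ i, (x i - y i)^2 = 2) : dist x y = Real.sqrt 2 := by
  rw [dist_eq_sqrt', h]

lemma sqrt2_ne_zero : Real.sqrt 2 ≠ 0 := by
  positivity

lemma sqrt2_ne_one : Real.sqrt 2 ≠ 1 := by
  intro h
  have h2 : Real.sqrt 2 ^ 2 = 2 := Real.sq_sqrt (by norm_num)
  rw [h] at h2
  norm_num at h2

def bvec (i : Fin 8) : E8 := EuclideanSpace.single i (1:ℝ)

def pt (A : Finset (Fin 8)) : E8 := WithLp.toLp 2 (fun i => if i ∈ A then (-(1/4) : ℝ) else 1/4)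

lemma bvec_apply (i j : Fin 8) : bvec i j = if j = i then 1 else 0 := by
  simp [bvec, EuclideanSpace.single_apply]

lemma pt_apply (A : Finset (Fin 8)) (j : Fin 8) :
    pt A j = if j ∈ A then (-(1/4):ℝ) else 1/4 := rfl

lemma bvec_mem_simplex (i : Fin 8) : bvec i ∈ simplex 7 := ⟨i, rfl⟩

lemma simplex_eq : simplex 7 = Set.range bvec := rfl

/-- Distance-square expansion against a basis vector. -/
lemma sum_sub_bvec (x : E8) (i : Fin 8) :
    ∑ j, (x j - bvec i j)^2 = (∑ j, (x j)^2) - 2 * x i + 1 := by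
  have h : ∀ j : Fin 8, (x j - bvec i j)^2
      = (x j)^2 - (if j = i then 2 * x j - 1 else 0) := by
    intro j
    rw [bvec_apply]
    by_cases hj : j = i <;> simp [hj] <;> ring
  rw [Finset.sum_congr rfl fun j _ => h j, Finset.sum_sub_distrib,
    Finset.sum_ite_eq' Finset.univ i (fun j => 2 * x j - 1)]
  simp
  ring

lemma sum_sq_pt (A : Finset (Fin 8)) : ∑ j, (pt A j)^2 = 1/2 := by
  have h : ∀ j : Fin 8, (pt A j)^2 = 1/16 := by
    intro j
    rw [pt_apply]
    split <;> norm_num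
  rw [Finset.sum_congr rfl fun j _ => h j, Finset.sum_const]
  simp
  norm_num

lemma sum_pt (A : Finset (Fin 8)) (hA : A.card = 2) : ∑ j, pt A j = 1 := by
  have h : ∀ j : Fin 8, pt A j = 1/4 - (if j ∈ A then (1/2:ℝ) else 0) := by
    intro j
    rw [pt_apply]
    split <;> norm_num
  rw [Finset.sum_congr rfl fun j _ => h j, Finset.sum_sub_distrib,
    Finset.sum_ite_mem, Finset.univ_inter, Finset.sum_const, Finset.sum_const, hA]
  simp
  norm_num

lemma dist_bvec_bvec {i j : Fin 8} (h : i ≠ j) : dist (bvec i) (bvec j) = Real.sqrt 2 := by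
  apply dist_of_sq_two
  have key : ∀ k : Fin 8, (bvec i k - bvec j k)^2
      = (if k = i then (1:ℝ) else 0) + (if k = j then 1 else 0) := by
    intro k
    rw [bvec_apply, bvec_apply]
    by_cases h1 : k = i <;> by_cases h2 : k = j
    · exact absurd (h1 ▸ h2) h
    · simp [h1, h2, h]
    · simp [h1, h2, Ne.symm h]
    · simp [h1, h2]
  rw [Finset.sum_congr rfl fun k _ => key k, Finset.sum_add_distrib,
    Finset.sum_ite_eq' Finset.univ i (fun _ => (1:ℝ)),
    Finset.sum_ite_eq' Finset.univ j (fun _ => (1:ℝ))]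
  norm_num

lemma bvec_ne_bvec {i j : Fin 8} (h : i ≠ j) : bvec i ≠ bvec j := by
  intro he
  have := dist_bvec_bvec h
  rw [he, dist_self] at this
  exact sqrt2_ne_zero this.symm

lemma bvec_inj : Function.Injective bvec := by
  intro i j h
  by_contra hne
  exact bvec_ne_bvec hne h

lemma dist_bvec_pt (i : Fin 8) (A : Finset (Fin 8)) :
    dist (bvec i) (pt A) = if i ∈ A then Real.sqrt 2 else 1 := by
  rw [dist_comm]
  by_cases h : i ∈ A
  · rw [if_pos h]
    apply dist_of_sq_two
    rw [sum_sub_bvec, sum_sq_pt, pt_apply, if_pos h]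
    norm_num
  · rw [if_neg h]
    apply dist_of_sq_one
    rw [sum_sub_bvec, sum_sq_pt, pt_apply, if_neg h]
    norm_num

lemma bvec_ne_pt (i : Fin 8) (A : Finset (Fin 8)) : bvec i ≠ pt A := by
  intro he
  have := dist_bvec_pt i A
  rw [he, dist_self] at this
  split at this
  · exact sqrt2_ne_zero this.symm
  · norm_num at this

lemma dist_pt_pt {A B : Finset (Fin 8)} (hd : Disjoint A B)
    (hA : A.card = 2) (hB : B.card = 2) : dist (pt A) (pt B) = 1 := by
  apply dist_of_sq_one
  have key : ∀ j : Fin 8, (pt A j - pt B j)^2 = if j ∈ A ∪ B then (1/4:ℝ) else 0 := by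
    intro j
    rw [pt_apply, pt_apply]
    by_cases h1 : j ∈ A <;> by_cases h2 : j ∈ B
    · exact absurd h2 (Finset.disjoint_left.mp hd h1)
    · rw [if_pos h1, if_neg h2, if_pos (Finset.mem_union_left _ h1)]; norm_num
    · rw [if_neg h1, if_pos h2, if_pos (Finset.mem_union_right _ h2)]; norm_num
    · rw [if_neg h1, if_neg h2, if_neg (by simp [Finset.mem_union, h1, h2])]; norm_num
  rw [Finset.sum_congr rfl fun j _ => key j, Finset.sum_ite_mem, Finset.univ_inter,
    Finset.sum_const, Finset.card_union_of_disjoint hd, hA, hB]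
  norm_num

lemma pt_ne_pt {A B : Finset (Fin 8)} (hd : Disjoint A B)
    (hA : A.card = 2) (hB : B.card = 2) : pt A ≠ pt B := by
  intro he
  have := dist_pt_pt hd hA hB
  rw [he, dist_self] at this
  norm_num at this

lemma simplex_ncard : (simplex 7).ncard = 8 := by
  rw [simplex_eq, ← Set.image_univ, Set.ncard_image_of_injective _ bvec_inj,
    Set.ncard_univ]
  simp


/-! ### The witness configuration -/

def A0 : Finset (Fin 8) := {0,1}
def A1 : Finset (Fin 8) := {2,3}
def A2 : Finset (Fin 8) := {4,5}
def A3 : Finset (Fin 8) := {6,7}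

def X0 : Set E8 := simplex 7 ∪ {pt A0, pt A1, pt A2, pt A3}

lemma X0_fin : X0.Finite :=
  (Set.finite_range _).union
    (((Set.finite_singleton _).insert _).insert _ |>.insert _)

lemma X0_plane : X0 ⊆ Hplane 7 := by
  rintro x (⟨i, rfl⟩ | hx)
  · show ∑ j, bvec i j = 1
    rw [Finset.sum_congr rfl fun j _ => bvec_apply i j,
      Finset.sum_ite_eq' Finset.univ i fun _ => (1:ℝ)]
    simp
  · simp only [Set.mem_insert_iff, Set.mem_singleton_iff] at hx
    rcases hx with rfl | rfl | rfl | rfl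
    · exact sum_pt A0 (by decide)
    · exact sum_pt A1 (by decide)
    · exact sum_pt A2 (by decide)
    · exact sum_pt A3 (by decide)

lemma X0_mem_cases {x : E8} (hx : x ∈ X0) :
    (∃ i, x = bvec i) ∨ x = pt A0 ∨ x = pt A1 ∨ x = pt A2 ∨ x = pt A3 := by
  rcases hx with ⟨i, rfl⟩ | hx
  · exact Or.inl ⟨i, rfl⟩
  · simp only [Set.mem_insert_iff, Set.mem_singleton_iff] at hx
    tauto

lemma dist_bvec_pt_or (i : Fin 8) (A : Finset (Fin 8)) :
    dist (bvec i) (pt A) = 1 ∨ dist (bvec i) (pt A) = Real.sqrt 2 := by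
  rw [dist_bvec_pt]
  by_cases h : i ∈ A <;> simp [h]

lemma dist_pt_bvec_or (A : Finset (Fin 8)) (i : Fin 8) :
    dist (pt A) (bvec i) = 1 ∨ dist (pt A) (bvec i) = Real.sqrt 2 := by
  rw [dist_comm]
  exact dist_bvec_pt_or i A

lemma X0_dist : distSet X0 = {1, Real.sqrt 2} := by
  apply Set.Subset.antisymm
  · rintro r ⟨x, hx, y, hy, hxy, rfl⟩
    simp only [Set.mem_insert_iff, Set.mem_singleton_iff]
    rcases X0_mem_cases hx with ⟨i, rfl⟩ | rfl | rfl | rfl | rfl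
    · rcases X0_mem_cases hy with ⟨j, rfl⟩ | rfl | rfl | rfl | rfl
      · exact Or.inr (dist_bvec_bvec fun h => hxy (congrArg bvec h))
      · exact dist_bvec_pt_or _ _
      · exact dist_bvec_pt_or _ _
      · exact dist_bvec_pt_or _ _
      · exact dist_bvec_pt_or _ _
    · rcases X0_mem_cases hy with ⟨j, rfl⟩ | rfl | rfl | rfl | rfl
      · exact dist_pt_bvec_or _ _
      · exact absurd rfl hxy
      · exact Or.inl (dist_pt_pt (by decide) (by decide) (by decide))
      · exact Or.inl (dist_pt_pt (by decide) (by decide) (by decide))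
      · exact Or.inl (dist_pt_pt (by decide) (by decide) (by decide))
    · rcases X0_mem_cases hy with ⟨j, rfl⟩ | rfl | rfl | rfl | rfl
      · exact dist_pt_bvec_or _ _
      · exact Or.inl (dist_pt_pt (by decide) (by decide) (by decide))
      · exact absurd rfl hxy
      · exact Or.inl (dist_pt_pt (by decide) (by decide) (by decide))
      · exact Or.inl (dist_pt_pt (by decide) (by decide) (by decide))
    · rcases X0_mem_cases hy with ⟨j, rfl⟩ | rfl | rfl | rfl | rfl
      · exact dist_pt_bvec_or _ _
      · exact Or.inl (dist_pt_pt (by decide) (by decide) (by decide))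
      · exact Or.inl (dist_pt_pt (by decide) (by decide) (by decide))
      · exact absurd rfl hxy
      · exact Or.inl (dist_pt_pt (by decide) (by decide) (by decide))
    · rcases X0_mem_cases hy with ⟨j, rfl⟩ | rfl | rfl | rfl | rfl
      · exact dist_pt_bvec_or _ _
      · exact Or.inl (dist_pt_pt (by decide) (by decide) (by decide))
      · exact Or.inl (dist_pt_pt (by decide) (by decide) (by decide))
      · exact Or.inl (dist_pt_pt (by decide) (by decide) (by decide))
      · exact absurd rfl hxy
  · rintro r (rfl | rfl)
    · exact ⟨pt A0, Or.inr (by simp), pt A1, Or.inr (by simp),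
        pt_ne_pt (by decide) (by decide) (by decide),
        dist_pt_pt (by decide) (by decide) (by decide)⟩
    · exact ⟨bvec 0, Or.inl ⟨0, rfl⟩, bvec 1, Or.inl ⟨1, rfl⟩,
        bvec_ne_bvec (by decide), dist_bvec_bvec (by decide)⟩

lemma X0_ncard : X0.ncard = 12 := by
  have hQfin : ({pt A0, pt A1, pt A2, pt A3} : Set E8).Finite :=
    ((Set.finite_singleton _).insert _).insert _ |>.insert _
  have hdisj : Disjoint (simplex 7) ({pt A0, pt A1, pt A2, pt A3} : Set E8) := by
    rw [Set.disjoint_left]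
    rintro x ⟨i, rfl⟩ hx
    simp only [Set.mem_insert_iff, Set.mem_singleton_iff] at hx
    rcases hx with h | h | h | h <;> exact bvec_ne_pt i _ h
  have hQ : ({pt A0, pt A1, pt A2, pt A3} : Set E8).ncard = 4 := by
    rw [Set.ncard_insert_of_notMem (by
        simp only [Set.mem_insert_iff, Set.mem_singleton_iff]
        push_neg
        exact ⟨pt_ne_pt (by decide) (by decide) (by decide),
          pt_ne_pt (by decide) (by decide) (by decide),
          pt_ne_pt (by decide) (by decide) (by decide)⟩)
      (((Set.finite_singleton _).insert _).insert _),
      Set.ncard_insert_of_notMem (by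
        simp only [Set.mem_insert_iff, Set.mem_singleton_iff]
        push_neg
        exact ⟨pt_ne_pt (by decide) (by decide) (by decide),
          pt_ne_pt (by decide) (by decide) (by decide)⟩)
      ((Set.finite_singleton _).insert _),
      Set.ncard_insert_of_notMem (by
        simp only [Set.mem_singleton_iff]
        exact pt_ne_pt (by decide) (by decide) (by decide))
      (Set.finite_singleton _),
      Set.ncard_singleton]
  show (simplex 7 ∪ _).ncard = 12
  rw [Set.ncard_union_eq hdisj (Set.finite_range _) hQfin, simplex_ncard, hQ]

lemma twelve_mem : ∃ X : Set (EuclideanSpace ℝ (Fin (7+1))),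
    X.Finite ∧ X ⊆ Hplane 7 ∧ simplex 7 ⊆ X ∧
    distSet X = {1, Real.sqrt 2} ∧ X.ncard = 12 :=
  ⟨X0, X0_fin, X0_plane, Set.subset_union_left, X0_dist, X0_ncard⟩


/-! ### The upper bound -/

def Afun (x : E8) : Finset (Fin 8) := Finset.univ.filter fun i => x i = -(1/4)

lemma key_extra {X : Set E8} (hH : X ⊆ Hplane 7) (hS : simplex 7 ⊆ X)
    (hd2 : ∀ x ∈ X, ∀ y ∈ X, x ≠ y →
      (∑ i, (x i - y i)^2) = 1 ∨ (∑ i, (x i - y i)^2) = 2)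
    {x : E8} (hx : x ∈ X) (hxs : x ∉ simplex 7) :
    (∀ i, x i = 1/4 ∨ x i = -(1/4)) ∧ (Afun x).card = 2 := by
  set s := ∑ j, (x j)^2 with hsdef
  have step1 : ∀ i : Fin 8, x i = s/2 ∨ x i = (s-1)/2 := by
    intro i
    have hne : x ≠ bvec i := fun h => hxs (h ▸ bvec_mem_simplex i)
    have h := hd2 x hx (bvec i) (hS (bvec_mem_simplex i)) hne
    rw [sum_sub_bvec] at h
    rcases h with h | h
    · left; linarith
    · right; linarith
  set K := Finset.univ.filter (fun i => x i = s/2) with hKdef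
  set L := Finset.univ.filter (fun i => ¬ x i = s/2) with hLdef
  have hcards : K.card + L.card = 8 := by
    rw [hKdef, hLdef]
    have := Finset.card_filter_add_card_filter_not
      (s := (Finset.univ : Finset (Fin 8))) (p := fun i => x i = s/2)
    simpa using this
  have hKval : ∀ i ∈ K, x i = s/2 := fun i hi => (Finset.mem_filter.mp hi).2
  have hLval : ∀ i ∈ L, x i = (s-1)/2 := by
    intro i hi
    rcases step1 i with h | h
    · exact absurd h (Finset.mem_filter.mp hi).2
    · exact h
  have hsplit : ∀ f : Fin 8 → ℝ, ∑ i, f i = ∑ i ∈ K, f i + ∑ i ∈ L, f i := by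
    intro f
    rw [hKdef, hLdef, Finset.sum_filter_add_sum_filter_not]
  have E1 : (K.card : ℝ) * (s/2) + (L.card : ℝ) * ((s-1)/2) = 1 := by
    have h1 : ∑ i, x i = 1 := hH hx
    rw [hsplit (fun i => x i), Finset.sum_congr rfl hKval, Finset.sum_congr rfl hLval,
      Finset.sum_const, Finset.sum_const, nsmul_eq_mul, nsmul_eq_mul] at h1
    exact h1
  have E2 : (K.card : ℝ) * (s/2)^2 + (L.card : ℝ) * ((s-1)/2)^2 = s := by
    have h2 : ∑ i, (x i)^2 = s := hsdef.symm
    have hKs : ∑ i ∈ K, (x i)^2 = ∑ i ∈ K, (s/2)^2 :=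
      Finset.sum_congr rfl (fun i hi => by rw [hKval i hi])
    have hLs : ∑ i ∈ L, (x i)^2 = ∑ i ∈ L, ((s-1)/2)^2 :=
      Finset.sum_congr rfl (fun i hi => by rw [hLval i hi])
    rw [hsplit (fun i => (x i)^2), hKs, hLs,
      Finset.sum_const, Finset.sum_const, nsmul_eq_mul, nsmul_eq_mul] at h2
    exact h2
  have hk8 : (L.card : ℝ) = 8 - (K.card : ℝ) := by
    have : (K.card : ℝ) + (L.card : ℝ) = 8 := by exact_mod_cast hcards
    linarith
  have hk6 : ((K.card : ℝ) - 6)^2 = 0 := by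
    linear_combination (-32:ℝ) * E2 + (2*(K.card:ℝ) + 16*s - 20) * E1 +
      (32*((s-1)/2)^2 - (2*(K.card:ℝ)+16*s-20)*((s-1)/2)) * hk8
  have hkr : (K.card : ℝ) = 6 := by
    have := pow_eq_zero_iff (n := 2) (by norm_num) |>.mp hk6
    linarith
  have hk : K.card = 6 := by exact_mod_cast hkr
  have hL2 : L.card = 2 := by omega
  have hs12 : s = 1/2 := by
    rw [hk, hL2] at E1
    push_cast at E1
    linarith
  have step2 : ∀ i : Fin 8, x i = 1/4 ∨ x i = -(1/4) := by
    intro i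
    rcases step1 i with h | h
    · left; rw [h, hs12]; norm_num
    · right; rw [h, hs12]; norm_num
  refine ⟨step2, ?_⟩
  have : Afun x = L := by
    rw [Afun, hLdef]
    apply Finset.filter_congr
    intro i _
    constructor
    · intro h
      rw [h, hs12]
      norm_num
    · intro h
      rcases step2 i with h' | h'
      · exact absurd (by rw [h', hs12]; norm_num) h
      · exact h'
  rw [this, hL2]

lemma extras_disjoint {X : Set E8} (hH : X ⊆ Hplane 7) (hS : simplex 7 ⊆ X)
    (hd2 : ∀ x ∈ X, ∀ y ∈ X, x ≠ y →
      (∑ i, (x i - y i)^2) = 1 ∨ (∑ i, (x i - y i)^2) = 2)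
    {x y : E8} (hx : x ∈ X \ simplex 7) (hy : y ∈ X \ simplex 7) (hxy : x ≠ y) :
    Disjoint (Afun x) (Afun y) := by
  obtain ⟨hx2, hxA⟩ := key_extra hH hS hd2 hx.1 hx.2
  obtain ⟨hy2, hyA⟩ := key_extra hH hS hd2 hy.1 hy.2
  set D := (Afun x ∪ Afun y) \ (Afun x ∩ Afun y) with hDdef
  have hterm : ∀ i : Fin 8, (x i - y i)^2 = if i ∈ D then (1/4:ℝ) else 0 := by
    intro i
    rcases hx2 i with h1 | h1 <;> rcases hy2 i with h2 | h2
    · have nx : i ∉ Afun x := by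
        simp only [Afun, Finset.mem_filter, Finset.mem_univ, true_and, h1]
        norm_num
      have ny : i ∉ Afun y := by
        simp only [Afun, Finset.mem_filter, Finset.mem_univ, true_and, h2]
        norm_num
      rw [h1, h2, if_neg (by simp [hDdef, Finset.mem_sdiff, Finset.mem_union, nx, ny])]
      norm_num
    · have nx : i ∉ Afun x := by
        simp only [Afun, Finset.mem_filter, Finset.mem_univ, true_and, h1]
        norm_num
      have ny : i ∈ Afun y := by
        simp only [Afun, Finset.mem_filter, Finset.mem_univ, true_and, h2]
      rw [h1, h2, if_pos (by
        simp [hDdef, Finset.mem_sdiff, Finset.mem_union, Finset.mem_inter, nx, ny])]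
      norm_num
    · have nx : i ∈ Afun x := by
        simp only [Afun, Finset.mem_filter, Finset.mem_univ, true_and, h1]
      have ny : i ∉ Afun y := by
        simp only [Afun, Finset.mem_filter, Finset.mem_univ, true_and, h2]
        norm_num
      rw [h1, h2, if_pos (by
        simp [hDdef, Finset.mem_sdiff, Finset.mem_union, Finset.mem_inter, nx, ny])]
      norm_num
    · have nx : i ∈ Afun x := by
        simp only [Afun, Finset.mem_filter, Finset.mem_univ, true_and, h1]
      have ny : i ∈ Afun y := by
        simp only [Afun, Finset.mem_filter, Finset.mem_univ, true_and, h2]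
      rw [h1, h2, if_neg (by simp [hDdef, Finset.mem_sdiff, nx, ny])]
      norm_num
  have hsum : ∑ i, (x i - y i)^2 = (D.card : ℝ) * (1/4) := by
    rw [Finset.sum_congr rfl fun i _ => hterm i, Finset.sum_ite_mem, Finset.univ_inter,
      Finset.sum_const, nsmul_eq_mul]
  have hDle : D.card ≤ 4 := by
    calc D.card ≤ (Afun x ∪ Afun y).card := Finset.card_le_card (Finset.sdiff_subset)
    _ ≤ (Afun x).card + (Afun y).card := Finset.card_union_le _ _
    _ = 4 := by rw [hxA, hyA]
  have hD4 : D.card = 4 := by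
    rcases hd2 x hx.1 y hy.1 hxy with h | h
    · rw [hsum] at h
      have : (D.card : ℝ) = 4 := by linarith
      exact_mod_cast this
    · rw [hsum] at h
      have : (D.card : ℝ) = 8 := by linarith
      have h8 : D.card = 8 := by exact_mod_cast this
      omega
  have hui : (Afun x ∪ Afun y).card + (Afun x ∩ Afun y).card = 4 := by
    rw [Finset.card_union_add_card_inter, hxA, hyA]
  have hD' : D.card = (Afun x ∪ Afun y).card - (Afun x ∩ Afun y).card :=
    Finset.card_sdiff_of_subset (Finset.inter_subset_union)
  have hint : (Afun x ∩ Afun y).card ≤ (Afun x ∪ Afun y).card :=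
    Finset.card_le_card (Finset.inter_subset_union)
  have h0 : (Afun x ∩ Afun y).card = 0 := by omega
  rw [Finset.disjoint_iff_inter_eq_empty]
  exact Finset.card_eq_zero.mp h0

lemma upper_bound {X : Set (EuclideanSpace ℝ (Fin (7+1)))}
    (hfin : X.Finite) (hH : X ⊆ Hplane 7) (hS : simplex 7 ⊆ X)
    (hD : distSet X = {1, Real.sqrt 2}) : X.ncard ≤ 12 := by
  have hd2 : ∀ x ∈ X, ∀ y ∈ X, x ≠ y →
      (∑ i, (x i - y i)^2) = 1 ∨ (∑ i, (x i - y i)^2) = 2 := by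
    intro x hx y hy hxy
    have hmem : dist x y ∈ distSet X := ⟨x, hx, y, hy, hxy, rfl⟩
    rw [hD] at hmem
    simp only [Set.mem_insert_iff, Set.mem_singleton_iff] at hmem
    rcases hmem with h | h
    · left
      rw [← dist_sq', h]
      norm_num
    · right
      rw [← dist_sq', h, Real.sq_sqrt]
      norm_num
  have hEfin : (X \ simplex 7).Finite := hfin.diff
  set F := hEfin.toFinset with hFdef
  have hmemF : ∀ x : E8, x ∈ F ↔ x ∈ X \ simplex 7 := fun x => Set.Finite.mem_toFinset _
  have hbU : (F.biUnion Afun).card = ∑ x ∈ F, (Afun x).card := by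
    apply Finset.card_biUnion
    intro x hx y hy hxy
    exact extras_disjoint hH hS hd2 ((hmemF x).mp hx) ((hmemF y).mp hy) hxy
  have hsumF : ∑ x ∈ F, (Afun x).card = 2 * F.card := by
    rw [Finset.sum_congr rfl
      (fun x hx => (key_extra hH hS hd2 ((hmemF x).mp hx).1 ((hmemF x).mp hx).2).2),
      Finset.sum_const, smul_eq_mul]
    ring
  have hle8 : (F.biUnion Afun).card ≤ 8 := by
    have := Finset.card_le_univ (F.biUnion Afun)
    simpa using this
  have hF4 : F.card ≤ 4 := by omega
  have hdiff : (X \ simplex 7).ncard = F.card :=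
    Set.ncard_eq_toFinset_card _ hEfin
  have htot : (X \ simplex 7).ncard + (simplex 7).ncard = X.ncard :=
    Set.ncard_diff_add_ncard_of_subset hS hfin
  rw [simplex_ncard, hdiff] at htot
  omega

/-- The largest 2-distance set in `H_7` containing `R_7` with distances `1` and `√2`
has exactly 12 points. -/
theorem stmt14 :
    IsGreatest {n : ℕ | ∃ X : Set (EuclideanSpace ℝ (Fin (7+1))),
      X.Finite ∧ X ⊆ Hplane 7 ∧ simplex 7 ⊆ X ∧
      distSet X = {1, Real.sqrt 2} ∧ X.ncard = n} 12 := by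
  constructor
  · exact twelve_mem
  · rintro n ⟨X, hfin, hH, hS, hD, rfl⟩
    exact upper_bound hfin hH hS hD
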